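/- Let q be a nonzero complex number that is not a root of unity, and let [n]_q = (qⁿ − q⁻ⁿ)/(q − q⁻¹). Then for any positive integer l and complex numbers α₁,…,α_l and a parameter ρ with the substitution a_j = exp(2π α_j/ρ): the skew-symmetrization (1/l!) Σ_{σ ∈ S_l} sgn(σ) Π_{1≤j<j'≤l} sinh(π(α_{σ(j')} − α_{σ(j)} − πi)/ρ) equals ([l]_q!/l!) Π_{1≤j<j'≤l} sinh(π(α_{j'} − α_j)/ρ), where q = exp(−π²i/ρ) and [l]_q! = Π_{m=1}^{l} [m]_q. -/

import Mathlib

open Finset Equiv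

namespace Stmt4Aux

def PP (l : ℕ) : Finset (Fin l × Fin l) := Finset.univ.filter fun p => p.1 < p.2

lemma mem_PP {l : ℕ} {p : Fin l × Fin l} : p ∈ PP l ↔ p.1 < p.2 := by simp [PP]

noncomputable def VV (l : ℕ) (b : Fin l → ℂ) : ℂ := ∏ p ∈ PP l, (b p.2 - b p.1)

noncomputable def FF (l : ℕ) (q : ℂ) (b : Fin l → ℂ) : ℂ :=
  ∑ σ : Perm (Fin l), (Perm.sign σ : ℤ) * ∏ p ∈ PP l, (q * b (σ p.2) - q⁻¹ * b (σ p.1))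

noncomputable def AltM (l : ℕ) (d : Fin l → ℕ) (b : Fin l → ℂ) : ℂ :=
  ∑ σ : Perm (Fin l), (Perm.sign σ : ℤ) * ∏ i, b (σ i) ^ d i

lemma prod_PP {l : ℕ} (f : Fin l × Fin l → ℂ) :
    ∏ p ∈ PP l, f p = ∏ i, ∏ j ∈ Finset.Ioi i, f (i, j) := by
  refine Eq.trans ?_ (Finset.prod_sigma' Finset.univ (fun i => Finset.Ioi i) (fun i j => f (i, j))).symm
  refine Finset.prod_nbij' (fun p => Sigma.mk p.1 p.2) (fun x => (x.1, x.2)) ?_ ?_ ?_ ?_ ?_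
  · intro p hp
    simp only [Finset.mem_sigma, Finset.mem_univ, Finset.mem_Ioi, true_and]
    exact mem_PP.1 hp
  · intro a ha
    simp only [Finset.mem_sigma, Finset.mem_univ, Finset.mem_Ioi] at ha
    exact mem_PP.2 ha.2
  · intro p _; rfl
  · intro a _; rfl
  · intro p _; rfl

lemma VV_eq_det {l : ℕ} (b : Fin l → ℂ) :
    VV l b = Matrix.det (Matrix.vandermonde b) := by
  rw [Matrix.det_vandermonde, VV, prod_PP]

lemma alt_perm {l : ℕ} (π : Perm (Fin l)) (b : Fin l → ℂ) :
    AltM l (fun i => (π i : ℕ)) b = ((Perm.sign π : ℤ) : ℂ) * VV l b := by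
  have h1 : ∀ σ : Perm (Fin l), (∏ i, b (σ i) ^ ((π i : ℕ))) = ∏ i, b ((σ * π⁻¹) i) ^ (i : ℕ) := by
    intro σ
    rw [← Equiv.prod_comp π (fun i => b ((σ * π⁻¹) i) ^ (i : ℕ))]
    simp [Perm.mul_apply]
  calc AltM l (fun i => (π i : ℕ)) b
      = ∑ σ : Perm (Fin l), ((Perm.sign σ : ℤ) : ℂ) * ∏ i, b ((σ * π⁻¹) i) ^ (i : ℕ) := by
        rw [AltM]; exact Finset.sum_congr rfl fun σ _ => by rw [h1 σ]
    _ = ∑ τ : Perm (Fin l), ((Perm.sign (τ * π) : ℤ) : ℂ) * ∏ i, b (τ i) ^ (i : ℕ) := by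
        refine Fintype.sum_equiv (Equiv.mulRight π⁻¹) _ _ fun σ => ?_
        simp [Perm.mul_apply]
    _ = ((Perm.sign π : ℤ) : ℂ) * ∑ τ : Perm (Fin l), ((Perm.sign τ : ℤ) : ℂ) * ∏ i, b (τ i) ^ (i : ℕ) := by
        rw [Finset.mul_sum]
        refine Finset.sum_congr rfl fun τ _ => ?_
        rw [map_mul]
        push_cast
        ring
    _ = ((Perm.sign π : ℤ) : ℂ) * VV l b := by
        rw [VV_eq_det, Matrix.det_apply]
        congr 1
        refine Finset.sum_congr rfl fun τ _ => ?_
        simp [Matrix.vandermonde_apply, Units.smul_def, zsmul_eq_mul]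

lemma alt_noninj {l : ℕ} {d : Fin l → ℕ} (hd : ¬ Function.Injective d) (b : Fin l → ℂ) :
    AltM l d b = 0 := by
  simp only [Function.Injective, not_forall] at hd
  obtain ⟨i, j, hij, hne⟩ := hd
  set s : Perm (Fin l) := Equiv.swap i j with hs
  have hds : ∀ k, d (s k) = d k := by
    intro k
    rcases eq_or_ne k i with rfl | hki
    · rw [hs]; rw [Equiv.swap_apply_left]; exact hij.symm
    rcases eq_or_ne k j with rfl | hkj
    · rw [hs]; rw [Equiv.swap_apply_right]; exact hij
    · rw [hs, Equiv.swap_apply_of_ne_of_ne hki hkj]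
  have hterm : ∀ σ : Perm (Fin l),
      ((Perm.sign (σ * s) : ℤ) : ℂ) * ∏ k, b ((σ * s) k) ^ d k
        = -(((Perm.sign σ : ℤ) : ℂ) * ∏ k, b (σ k) ^ d k) := by
    intro σ
    have h2 : ∏ k, b ((σ * s) k) ^ d k = ∏ k, b (σ k) ^ d k := by
      calc ∏ k, b ((σ * s) k) ^ d k = ∏ k, b (σ (s k)) ^ d (s k) := by
            exact Finset.prod_congr rfl fun k _ => by rw [hds, Perm.mul_apply]
        _ = ∏ k, b (σ k) ^ d k := Equiv.prod_comp s (fun k => b (σ k) ^ d k)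
    rw [h2, map_mul, Equiv.Perm.sign_swap hne]
    push_cast
    ring
  have key : AltM l d b = -AltM l d b := by
    conv_lhs => rw [AltM, ← Equiv.sum_comp (Equiv.mulRight s)
      (fun σ => ((Perm.sign σ : ℤ) : ℂ) * ∏ k, b (σ k) ^ d k)]
    rw [AltM, ← Finset.sum_neg_distrib]
    exact Finset.sum_congr rfl fun σ _ => hterm σ
  have h2 : (2:ℂ) * AltM l d b = 0 := by linear_combination key
  have := mul_eq_zero.mp h2
  simpa using this

def eS {l : ℕ} (S : Finset (Fin l × Fin l)) (p : Fin l × Fin l) : Fin l :=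
  if p ∈ S then p.2 else p.1

def dS (l : ℕ) (S : Finset (Fin l × Fin l)) (i : Fin l) : ℕ :=
  ((PP l).filter fun p => eS S p = i).card

lemma eS_mem {l : ℕ} (S : Finset (Fin l × Fin l)) (p : Fin l × Fin l) :
    eS S p = p.1 ∨ eS S p = p.2 := by
  rw [eS]; split <;> [right; left] <;> rfl

lemma dS_lt {l : ℕ} (hl : 1 ≤ l) (S : Finset (Fin l × Fin l)) (i : Fin l) : dS l S i < l := by
  have hcard : dS l S i ≤ (Finset.univ.erase i).card := by
    refine Finset.card_le_card_of_injOn (fun p => if p.1 = i then p.2 else p.1) ?_ ?_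
    · intro p hp
      simp only [Finset.mem_coe, Finset.mem_filter] at hp ⊢
      have hlt : p.1 < p.2 := mem_PP.1 hp.1
      rcases eq_or_ne p.1 i with h1 | h1
      · simp only [h1, if_pos rfl, Finset.mem_erase, Finset.mem_univ, and_true]
        exact fun h => absurd (h ▸ h1 ▸ hlt) (lt_irrefl _)
      · simp only [if_neg h1, Finset.mem_erase, Finset.mem_univ, and_true]
        exact h1
    · intro p hp p' hp' heq
      simp only [Finset.coe_filter, Set.mem_setOf_eq] at hp hp'
      have hlt : p.1 < p.2 := mem_PP.1 hp.1
      have hlt' : p'.1 < p'.2 := mem_PP.1 hp'.1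
      have h2 : p.1 ≠ i → p.2 = i := fun h => by
        rcases eS_mem S p with h' | h'
        · exact absurd (h' ▸ hp.2) h
        · exact h' ▸ hp.2
      have h2' : p'.1 ≠ i → p'.2 = i := fun h => by
        rcases eS_mem S p' with h' | h'
        · exact absurd (h' ▸ hp'.2) h
        · exact h' ▸ hp'.2
      rcases eq_or_ne p.1 i with ha | ha <;> rcases eq_or_ne p'.1 i with hb | hb
      · simp only [ha, hb, if_pos rfl] at heq
        exact Prod.ext (ha.trans hb.symm) heq
      · simp only [ha, hb, if_pos, if_neg, ite_true, ite_false, eq_self_iff_true] at heq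
        exfalso
        have hx : i < p'.1 := by rw [← heq, ← ha]; exact hlt
        -- fallback
        have h3 : p'.2 = i := h2' hb
        exact lt_irrefl i (lt_trans hx (h3 ▸ hlt'))
      · simp only [ha, hb, if_pos, if_neg, ite_true, ite_false, eq_self_iff_true] at heq
        exfalso
        have h3 : p.2 = i := h2 ha
        have hx : i < p.1 := by rw [heq, ← hb]; exact hlt'
        exact lt_irrefl i (lt_trans hx (h3 ▸ hlt))
      · simp [ha, hb] at heq
        exact Prod.ext heq ((h2 ha).trans (h2' hb).symm)
  have : (Finset.univ.erase i).card = l - 1 := by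
    rw [Finset.card_erase_of_mem (Finset.mem_univ i), Finset.card_univ, Fintype.card_fin]
  omega

lemma prod_eS {l : ℕ} (S : Finset (Fin l × Fin l)) (g : Fin l → ℂ) :
    ∏ p ∈ PP l, g (eS S p) = ∏ i, g i ^ dS l S i := by
  rw [← Finset.prod_fiberwise_of_maps_to (g := fun p => eS S p)
    (fun p _ => Finset.mem_univ (eS S p)) (fun p => g (eS S p))]
  refine Finset.prod_congr rfl fun i _ => ?_
  rw [dS, ← Finset.prod_const]
  refine Finset.prod_congr rfl fun p hp => ?_
  rw [(Finset.mem_filter.1 hp).2]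

lemma FF_expand {l : ℕ} (q : ℂ) (b : Fin l → ℂ) :
    FF l q b = ∑ S ∈ (PP l).powerset,
      (q ^ S.card * (-q⁻¹) ^ ((PP l) \ S).card) * AltM l (dS l S) b := by
  rw [FF]
  have hinner : ∀ σ : Perm (Fin l),
      (∏ p ∈ PP l, (q * b (σ p.2) - q⁻¹ * b (σ p.1)))
        = ∑ S ∈ (PP l).powerset, (q ^ S.card * (-q⁻¹) ^ ((PP l) \ S).card) * ∏ i, b (σ i) ^ dS l S i := by
    intro σ
    have hre : ∀ p : Fin l × Fin l, q * b (σ p.2) - q⁻¹ * b (σ p.1) = q * b (σ p.2) + (-q⁻¹) * b (σ p.1) := fun p => by ring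
    rw [Finset.prod_congr rfl (fun p _ => hre p), Finset.prod_add]
    refine Finset.sum_congr rfl fun S hS => ?_
    have hSP : S ⊆ PP l := Finset.mem_powerset.1 hS
    rw [Finset.prod_mul_distrib, Finset.prod_mul_distrib, Finset.prod_const, Finset.prod_const]
    have hsplit : (∏ p ∈ S, b (σ p.2)) * ∏ p ∈ (PP l) \ S, b (σ p.1)
        = ∏ i, b (σ i) ^ dS l S i := by
      rw [← prod_eS S (fun i => b (σ i)), ← Finset.prod_sdiff hSP, mul_comm]
      congr 1
      · exact Finset.prod_congr rfl fun p hp => by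
          rw [eS, if_neg (Finset.mem_sdiff.1 hp).2]
      · exact Finset.prod_congr rfl fun p hp => by rw [eS, if_pos hp]
    calc (q ^ S.card * ∏ p ∈ S, b (σ p.2)) * ((-q⁻¹) ^ ((PP l) \ S).card * ∏ p ∈ (PP l) \ S, b (σ p.1))
        = (q ^ S.card * (-q⁻¹) ^ ((PP l) \ S).card) * ((∏ p ∈ S, b (σ p.2)) * ∏ p ∈ (PP l) \ S, b (σ p.1)) := by ring
      _ = _ := by rw [hsplit]
  calc ∑ σ : Perm (Fin l), ((Perm.sign σ : ℤ) : ℂ) * ∏ p ∈ PP l, (q * b (σ p.2) - q⁻¹ * b (σ p.1))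
      = ∑ σ : Perm (Fin l), ∑ S ∈ (PP l).powerset, ((Perm.sign σ : ℤ) : ℂ) * ((q ^ S.card * (-q⁻¹) ^ ((PP l) \ S).card) * ∏ i, b (σ i) ^ dS l S i) := by
        refine Finset.sum_congr rfl fun σ _ => ?_
        rw [hinner σ, Finset.mul_sum]
    _ = ∑ S ∈ (PP l).powerset, ∑ σ : Perm (Fin l), ((Perm.sign σ : ℤ) : ℂ) * ((q ^ S.card * (-q⁻¹) ^ ((PP l) \ S).card) * ∏ i, b (σ i) ^ dS l S i) := Finset.sum_comm
    _ = ∑ S ∈ (PP l).powerset, (q ^ S.card * (-q⁻¹) ^ ((PP l) \ S).card) * AltM l (dS l S) b := by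
        refine Finset.sum_congr rfl fun S _ => ?_
        rw [AltM, Finset.mul_sum]
        exact Finset.sum_congr rfl fun σ _ => by ring

lemma prop_lemma {l : ℕ} (hl : 1 ≤ l) (q : ℂ) (b b' : Fin l → ℂ) :
    FF l q b * VV l b' = FF l q b' * VV l b := by
  rw [FF_expand q b, FF_expand q b', Finset.sum_mul, Finset.sum_mul]
  refine Finset.sum_congr rfl fun S _ => ?_
  by_cases hinj : Function.Injective (dS l S)
  · have hfin : Function.Injective (fun i => (⟨dS l S i, dS_lt hl S i⟩ : Fin l)) := by
      intro x y hxy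
      exact hinj (congrArg Fin.val hxy)
    have hbij := Finite.injective_iff_bijective.1 hfin
    set π := Equiv.ofBijective _ hbij with hπ
    have hd : dS l S = fun i => ((π i : Fin l) : ℕ) := by funext i; rfl
    rw [hd, alt_perm, alt_perm]
    ring
  · rw [alt_noninj hinj, alt_noninj hinj]
    ring

lemma zpow_eq_one {q : ℂ} (hq0 : q ≠ 0) (hroot : ∀ k : ℕ, 0 < k → q ^ k ≠ 1) {z : ℤ}
    (h : q ^ z = 1) : z = 0 := by
  rcases lt_trichotomy z 0 with h1 | h1 | h1
  · have h2 : q ^ (-z) = 1 := by rw [zpow_neg, h, inv_one]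
    have hn : 0 < (-z).toNat := by omega
    rw [← Int.toNat_of_nonneg (by omega : (0:ℤ) ≤ -z), zpow_natCast] at h2
    exact absurd h2 (hroot _ hn)
  · exact h1
  · have hn : 0 < z.toNat := by omega
    rw [← Int.toNat_of_nonneg (le_of_lt h1), zpow_natCast] at h
    exact absurd h (hroot _ hn)

lemma zpow_injq {q : ℂ} (hq0 : q ≠ 0) (hroot : ∀ k : ℕ, 0 < k → q ^ k ≠ 1) {m n : ℤ}
    (h : q ^ m = q ^ n) : m = n := by
  have h2 : q ^ (m - n) = 1 := by
    rw [zpow_sub₀ hq0, h, div_self (zpow_ne_zero _ hq0)]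
  have := zpow_eq_one hq0 hroot h2
  omega

lemma u_ne {q : ℂ} (hq0 : q ≠ 0) (hroot : ∀ k : ℕ, 0 < k → q ^ k ≠ 1) {m : ℤ}
    (hm : m ≠ 0) : q ^ m - q ^ (-m) ≠ 0 := by
  intro h
  have := zpow_injq hq0 hroot (sub_eq_zero.1 h)
  omega

lemma tele {q : ℂ} (hq0 : q ≠ 0) (hroot : ∀ k : ℕ, 0 < k → q ^ k ≠ 1) (n : ℕ) :
    ∏ k ∈ Finset.range n, (q ^ ((k:ℤ)+2) - q ^ (-((k:ℤ)+2)))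
      = (q ^ ((n:ℤ)+1) - q ^ (-((n:ℤ)+1))) / (q ^ (1:ℤ) - q ^ (-1:ℤ)) *
        ∏ k ∈ Finset.range n, (q ^ ((k:ℤ)+1) - q ^ (-((k:ℤ)+1))) := by
  induction n with
  | zero =>
    simp only [Finset.range_zero, Finset.prod_empty, mul_one, Nat.cast_zero, zero_add]
    exact (div_self (u_ne hq0 hroot one_ne_zero)).symm
  | succ n ih =>
    rw [Finset.prod_range_succ, ih, Finset.prod_range_succ]
    set A := ∏ k ∈ Finset.range n, (q ^ ((k:ℤ)+1) - q ^ (-((k:ℤ)+1))) with hA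
    push_cast
    ring

lemma row {q : ℂ} (hq0 : q ≠ 0) (hroot : ∀ k : ℕ, 0 < k → q ^ k ≠ 1) (i n : ℕ) :
    ∏ k ∈ Finset.range n, (q ^ (2*(i:ℤ)+2*(k:ℤ)+3) - q ^ (2*(i:ℤ)-1))
      = (q ^ ((n:ℤ)+1) - q ^ (-((n:ℤ)+1))) / (q ^ (1:ℤ) - q ^ (-1:ℤ)) *
        ∏ k ∈ Finset.range n, (q ^ (2*(i:ℤ)+2*(k:ℤ)+2) - q ^ (2*(i:ℤ))) := by
  have h1 : ∀ k : ℕ, q ^ (2*(i:ℤ)+2*(k:ℤ)+3) - q ^ (2*(i:ℤ)-1)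
      = q ^ (2*(i:ℤ)+(k:ℤ)+1) * (q ^ ((k:ℤ)+2) - q ^ (-((k:ℤ)+2))) := by
    intro k
    have e1 : 2*(i:ℤ)+2*(k:ℤ)+3 = (2*(i:ℤ)+(k:ℤ)+1) + ((k:ℤ)+2) := by ring
    have e2 : 2*(i:ℤ)-1 = (2*(i:ℤ)+(k:ℤ)+1) + (-((k:ℤ)+2)) := by ring
    rw [e1, e2, zpow_add₀ hq0 (2*(i:ℤ)+(k:ℤ)+1) ((k:ℤ)+2), zpow_add₀ hq0 (2*(i:ℤ)+(k:ℤ)+1) (-((k:ℤ)+2)), mul_sub]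
  have h2 : ∀ k : ℕ, q ^ (2*(i:ℤ)+2*(k:ℤ)+2) - q ^ (2*(i:ℤ))
      = q ^ (2*(i:ℤ)+(k:ℤ)+1) * (q ^ ((k:ℤ)+1) - q ^ (-((k:ℤ)+1))) := by
    intro k
    have e1 : 2*(i:ℤ)+2*(k:ℤ)+2 = (2*(i:ℤ)+(k:ℤ)+1) + ((k:ℤ)+1) := by ring
    have e2 : (2*(i:ℤ):ℤ) = (2*(i:ℤ)+(k:ℤ)+1) + (-((k:ℤ)+1)) := by ring
    rw [e1, mul_sub, ← zpow_add₀ hq0, ← zpow_add₀ hq0, ← e1, ← e2]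
  calc ∏ k ∈ Finset.range n, (q ^ (2*(i:ℤ)+2*(k:ℤ)+3) - q ^ (2*(i:ℤ)-1))
      = ∏ k ∈ Finset.range n, q ^ (2*(i:ℤ)+(k:ℤ)+1) * (q ^ ((k:ℤ)+2) - q ^ (-((k:ℤ)+2))) :=
        Finset.prod_congr rfl fun k _ => h1 k
    _ = (∏ k ∈ Finset.range n, q ^ (2*(i:ℤ)+(k:ℤ)+1)) *
          ∏ k ∈ Finset.range n, (q ^ ((k:ℤ)+2) - q ^ (-((k:ℤ)+2))) := Finset.prod_mul_distrib
    _ = (∏ k ∈ Finset.range n, q ^ (2*(i:ℤ)+(k:ℤ)+1)) *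
          ((q ^ ((n:ℤ)+1) - q ^ (-((n:ℤ)+1))) / (q ^ (1:ℤ) - q ^ (-1:ℤ)) *
            ∏ k ∈ Finset.range n, (q ^ ((k:ℤ)+1) - q ^ (-((k:ℤ)+1)))) := by
        rw [tele hq0 hroot]
    _ = (q ^ ((n:ℤ)+1) - q ^ (-((n:ℤ)+1))) / (q ^ (1:ℤ) - q ^ (-1:ℤ)) *
          ((∏ k ∈ Finset.range n, q ^ (2*(i:ℤ)+(k:ℤ)+1)) *
            ∏ k ∈ Finset.range n, (q ^ ((k:ℤ)+1) - q ^ (-((k:ℤ)+1)))) := by ring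
    _ = (q ^ ((n:ℤ)+1) - q ^ (-((n:ℤ)+1))) / (q ^ (1:ℤ) - q ^ (-1:ℤ)) *
          ∏ k ∈ Finset.range n, (q ^ (2*(i:ℤ)+(k:ℤ)+1) * (q ^ ((k:ℤ)+1) - q ^ (-((k:ℤ)+1)))) := by
        rw [Finset.prod_mul_distrib]
    _ = _ := by
        rw [Finset.prod_congr rfl fun k _ => (h2 k).symm]

lemma perm_eq_one {l : ℕ} (σ : Perm (Fin l))
    (h : ∀ p ∈ PP l, ((σ p.1 : ℕ)) ≠ (σ p.2 : ℕ) + 1) : σ = 1 := by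
  have hmono : StrictMono (⇑σ⁻¹) := by
    cases l with
    | zero => intro a b _; exact a.elim0
    | succ n =>
      rw [Fin.strictMono_iff_lt_succ]
      intro i
      rcases lt_trichotomy (σ⁻¹ (Fin.castSucc i)) (σ⁻¹ i.succ) with h1 | h1 | h1
      · exact h1
      · exact absurd (σ⁻¹.injective h1) (Fin.castSucc_lt_succ : Fin.castSucc i < i.succ).ne
      · exact absurd (by simp [Fin.val_succ] : ((σ (σ⁻¹ i.succ) : ℕ)) = (σ (σ⁻¹ (Fin.castSucc i)) : ℕ) + 1)
          (h (σ⁻¹ i.succ, σ⁻¹ (Fin.castSucc i)) (mem_PP.2 h1))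
  have hrange : Set.range ⇑σ⁻¹ = Set.range (id : Fin l → Fin l) := by
    rw [Equiv.range_eq_univ, Set.range_id]
  haveI inst : WellFoundedLT (Fin l) := inferInstance
  have hid : ⇑σ⁻¹ = id :=
    (@StrictMono.range_inj (Fin l) (Fin l) _ _ inst _ id hmono strictMono_id).1 hrange
  have : σ⁻¹ = 1 := Equiv.ext fun x => congrFun hid x
  exact inv_eq_one.1 this

lemma prod_Ioi_to_range {l : ℕ} (i : Fin l) (g : ℕ → ℂ) :
    ∏ j ∈ Finset.Ioi i, g (j:ℕ) = ∏ k ∈ Finset.range (l - 1 - (i:ℕ)), g ((i:ℕ) + 1 + k) := by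
  refine Finset.prod_bij (fun j _ => (j:ℕ) - (i:ℕ) - 1) ?_ ?_ ?_ ?_
  · intro j hj
    have h1 : i < j := Finset.mem_Ioi.1 hj
    rw [Fin.lt_def] at h1
    have h2 : (j:ℕ) < l := j.isLt
    simp only [Finset.mem_range]
    omega
  · intro a ha b hb hab
    have h1 : i < a := Finset.mem_Ioi.1 ha
    have h2 : i < b := Finset.mem_Ioi.1 hb
    rw [Fin.lt_def] at h1 h2
    exact Fin.ext (by omega)
  · intro k hk
    have h1 : k < l - 1 - (i:ℕ) := Finset.mem_range.1 hk
    have h2 : (i:ℕ) < l := i.isLt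
    refine ⟨⟨(i:ℕ) + 1 + k, by omega⟩, Finset.mem_Ioi.2 (Fin.lt_def.2 ?_), ?_⟩
    · simp only [Fin.val_mk]
      omega
    · simp only [Fin.val_mk]
      omega
  · intro j hj
    have h1 : i < j := Finset.mem_Ioi.1 hj
    rw [Fin.lt_def] at h1
    exact congrArg g (by omega)

lemma prod_Icc_to_range (l : ℕ) (g : ℕ → ℂ) :
    ∏ m ∈ Finset.Icc 1 l, g m = ∏ j ∈ Finset.range l, g (j+1) := by
  refine Finset.prod_bij (fun m _ => m - 1) ?_ ?_ ?_ ?_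
  · intro m hm
    rw [Finset.mem_Icc] at hm
    simp only [Finset.mem_range]
    omega
  · intro a ha b hb hab
    rw [Finset.mem_Icc] at ha hb
    omega
  · intro j hj
    rw [Finset.mem_range] at hj
    exact ⟨j + 1, Finset.mem_Icc.2 (by omega), by simp⟩
  · intro m hm
    rw [Finset.mem_Icc] at hm
    exact congrArg g (by omega)

lemma FF_eval {l : ℕ} {q : ℂ} (hq0 : q ≠ 0) (hroot : ∀ k : ℕ, 0 < k → q ^ k ≠ 1) :
    FF l q (fun k : Fin l => q ^ (2 * ((k:ℕ):ℤ))) =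
      (∏ m ∈ Finset.Icc 1 l, ((q ^ m - q⁻¹ ^ m) / (q - q⁻¹))) *
        VV l (fun k : Fin l => q ^ (2 * ((k:ℕ):ℤ))) := by
  set F : ℕ → ℂ := fun n => (q ^ ((n:ℤ)+1) - q ^ (-((n:ℤ)+1))) / (q ^ (1:ℤ) - q ^ (-1:ℤ)) with hF
  set R : ℕ → ℂ := fun i => ∏ k ∈ Finset.range (l - 1 - i),
    (q ^ (2*(i:ℤ)+2*(k:ℤ)+2) - q ^ (2*(i:ℤ))) with hR
  have hL : FF l q (fun k : Fin l => q ^ (2 * ((k:ℕ):ℤ)))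
      = ∏ i ∈ Finset.range l, (F (l - 1 - i) * R i) := by
    rw [FF]
    rw [Finset.sum_eq_single_of_mem (1 : Perm (Fin l)) (Finset.mem_univ _) ?side]
    case side =>
      intro σ _ hσ
      have hex : ∃ p ∈ PP l, ((σ p.1 : ℕ)) = (σ p.2 : ℕ) + 1 := by
        by_contra hco
        push_neg at hco
        exact hσ (perm_eq_one σ hco)
      obtain ⟨p, hp, hval⟩ := hex
      refine mul_eq_zero_of_right _ (Finset.prod_eq_zero hp ?_)
      have h1 : q * q ^ (2 * ((σ p.2 : ℕ):ℤ)) = q ^ (2 * ((σ p.2 : ℕ):ℤ) + 1) := by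
        rw [zpow_add₀ hq0, zpow_one]; ring
      have h2 : q⁻¹ * q ^ (2 * ((σ p.1 : ℕ):ℤ)) = q ^ (2 * ((σ p.1 : ℕ):ℤ) - 1) := by
        rw [zpow_sub₀ hq0, zpow_one, inv_mul_eq_div]
      rw [h1, h2, sub_eq_zero]
      exact congrArg (fun t : ℤ => q ^ t) (by omega)
    · simp only [Equiv.Perm.sign_one, Units.val_one, Int.cast_one, one_mul, Equiv.Perm.one_apply]
      rw [prod_PP (fun p => q * q ^ (2 * ((p.2:ℕ):ℤ)) - q⁻¹ * q ^ (2 * ((p.1:ℕ):ℤ)))]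
      calc ∏ i : Fin l, ∏ j ∈ Finset.Ioi i,
            (q * q ^ (2*((j:ℕ):ℤ)) - q⁻¹ * q ^ (2*((i:ℕ):ℤ)))
          = ∏ i : Fin l, (F (l - 1 - (i:ℕ)) * R (i:ℕ)) := by
            refine Finset.prod_congr rfl fun i _ => ?_
            rw [prod_Ioi_to_range i (fun m => q * q ^ (2*(m:ℤ)) - q⁻¹ * q ^ (2*((i:ℕ):ℤ)))]
            have e3 : ∀ k : ℕ, q * q ^ (2*((((i:ℕ)+1+k : ℕ)):ℤ)) - q⁻¹ * q ^ (2*((i:ℕ):ℤ))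
                = q ^ (2*((i:ℕ):ℤ)+2*(k:ℤ)+3) - q ^ (2*((i:ℕ):ℤ)-1) := by
              intro k
              have h1 : q * q ^ (2*((((i:ℕ)+1+k : ℕ)):ℤ)) = q ^ (2*((i:ℕ):ℤ)+2*(k:ℤ)+3) := by
                rw [show (2*((i:ℕ):ℤ)+2*(k:ℤ)+3) = 1 + 2*((((i:ℕ)+1+k : ℕ)):ℤ) from by
                  push_cast; ring, zpow_add₀ hq0, zpow_one]
              have h2 : q⁻¹ * q ^ (2*((i:ℕ):ℤ)) = q ^ (2*((i:ℕ):ℤ)-1) := by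
                rw [zpow_sub₀ hq0, zpow_one, inv_mul_eq_div]
              rw [h1, h2]
            rw [Finset.prod_congr rfl (fun k _ => e3 k), row hq0 hroot (i:ℕ) (l-1-(i:ℕ))]
        _ = ∏ i ∈ Finset.range l, (F (l - 1 - i) * R i) :=
            Fin.prod_univ_eq_prod_range (fun i => F (l - 1 - i) * R i) l
  have hV : VV l (fun k : Fin l => q ^ (2 * ((k:ℕ):ℤ))) = ∏ i ∈ Finset.range l, R i := by
    rw [VV, prod_PP (fun p => q ^ (2 * ((p.2:ℕ):ℤ)) - q ^ (2 * ((p.1:ℕ):ℤ)))]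
    calc ∏ i : Fin l, ∏ j ∈ Finset.Ioi i, (q ^ (2*((j:ℕ):ℤ)) - q ^ (2*((i:ℕ):ℤ)))
        = ∏ i : Fin l, R (i:ℕ) := by
          refine Finset.prod_congr rfl fun i _ => ?_
          rw [prod_Ioi_to_range i (fun m => q ^ (2*(m:ℤ)) - q ^ (2*((i:ℕ):ℤ))), hR]
          refine Finset.prod_congr rfl fun k _ => ?_
          congr 1
          exact congrArg (fun t : ℤ => q ^ t) (by push_cast; ring)
      _ = ∏ i ∈ Finset.range l, R i := Fin.prod_univ_eq_prod_range (fun i => R i) l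
  have hc : (∏ m ∈ Finset.Icc 1 l, ((q ^ m - q⁻¹ ^ m) / (q - q⁻¹)))
      = ∏ i ∈ Finset.range l, F (l - 1 - i) := by
    rw [prod_Icc_to_range l (fun m => (q ^ m - q⁻¹ ^ m) / (q - q⁻¹)),
      Finset.prod_range_reflect (fun j => F j) l]
    refine Finset.prod_congr rfl fun j _ => ?_
    rw [hF]
    have h1 : q ^ (j+1 : ℕ) = q ^ ((j:ℤ)+1) := by
      rw [← zpow_natCast]
      exact congrArg (fun t : ℤ => q ^ t) (by push_cast; ring)
    have h2 : q⁻¹ ^ (j+1 : ℕ) = q ^ (-((j:ℤ)+1)) := by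
      rw [inv_pow, ← zpow_natCast, ← zpow_neg]
      exact congrArg (fun t : ℤ => q ^ t) (by push_cast; ring)
    have h3 : q - q⁻¹ = q ^ (1:ℤ) - q ^ (-1:ℤ) := by
      rw [zpow_one, zpow_neg_one]
    rw [h1, h2, h3]
  rw [hL, hV, hc, ← Finset.prod_mul_distrib]

lemma VV_eval_ne {l : ℕ} {q : ℂ} (hq0 : q ≠ 0) (hroot : ∀ k : ℕ, 0 < k → q ^ k ≠ 1) :
    VV l (fun k : Fin l => q ^ (2 * ((k:ℕ):ℤ))) ≠ 0 := by
  rw [VV]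
  refine Finset.prod_ne_zero_iff.2 fun p hp => ?_
  have hlt : p.1 < p.2 := mem_PP.1 hp
  rw [Fin.lt_def] at hlt
  intro h
  have h2 := zpow_injq hq0 hroot (sub_eq_zero.1 h)
  omega

lemma core {l : ℕ} (hl : 1 ≤ l) {q : ℂ} (hq0 : q ≠ 0)
    (hroot : ∀ k : ℕ, 0 < k → q ^ k ≠ 1) (b : Fin l → ℂ) :
    FF l q b = (∏ m ∈ Finset.Icc 1 l, ((q ^ m - q⁻¹ ^ m) / (q - q⁻¹))) * VV l b := by
  have h1 := prop_lemma hl q b (fun k : Fin l => q ^ (2 * ((k:ℕ):ℤ)))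
  rw [FF_eval hq0 hroot] at h1
  apply mul_right_cancel₀ (VV_eval_ne hq0 hroot)
  rw [h1]
  ring

lemma sym_prod {l : ℕ} (f : Fin l → Fin l → ℂ) (hf : ∀ i j, f i j = f j i)
    (σ : Perm (Fin l)) :
    ∏ p ∈ PP l, f (σ p.1) (σ p.2) = ∏ p ∈ PP l, f p.1 p.2 := by
  refine Finset.prod_nbij'
    (fun p => if σ p.1 < σ p.2 then (σ p.1, σ p.2) else (σ p.2, σ p.1))
    (fun p => if σ⁻¹ p.1 < σ⁻¹ p.2 then (σ⁻¹ p.1, σ⁻¹ p.2) else (σ⁻¹ p.2, σ⁻¹ p.1))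
    ?_ ?_ ?_ ?_ ?_
  · intro p hp
    have hlt : p.1 < p.2 := mem_PP.1 hp
    split_ifs with h
    · exact mem_PP.2 h
    · have hne : σ p.1 ≠ σ p.2 := fun he => absurd (σ.injective he) hlt.ne
      exact mem_PP.2 (lt_of_le_of_ne (not_lt.1 h) (Ne.symm hne))
  · intro p hp
    have hlt : p.1 < p.2 := mem_PP.1 hp
    split_ifs with h
    · exact mem_PP.2 h
    · have hne : σ⁻¹ p.1 ≠ σ⁻¹ p.2 := fun he => absurd (σ⁻¹.injective he) hlt.ne
      exact mem_PP.2 (lt_of_le_of_ne (not_lt.1 h) (Ne.symm hne))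
  · intro p hp
    have hlt : p.1 < p.2 := mem_PP.1 hp
    split_ifs with h h2 h2 <;>
      simp only [Equiv.Perm.coe_inv, Equiv.symm_apply_apply] at h2 ⊢ <;>
      first
      | exact Prod.mk.eta
      | exact absurd hlt h2
      | exact absurd h2 (asymm hlt)
  · intro p hp
    have hlt : p.1 < p.2 := mem_PP.1 hp
    split_ifs with h h2 h2 <;>
      simp only [Equiv.Perm.coe_inv, Equiv.apply_symm_apply] at h2 ⊢ <;>
      first
      | exact Prod.mk.eta
      | exact absurd hlt h2
      | exact absurd h2 (asymm hlt)
  · intro p hp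
    split_ifs with h
    · rfl
    · exact hf _ _

end Stmt4Aux

theorem stmt4 (l : ℕ) (hl : 1 ≤ l) (ρ : ℂ) (hρ : ρ ≠ 0) (α : Fin l → ℂ)
    (q : ℂ) (hq : q = Complex.exp (-(Real.pi : ℂ) ^ 2 * Complex.I / ρ))
    (hq0 : q ≠ 0) (hroot : ∀ k : ℕ, 0 < k → q ^ k ≠ 1) :
    (1 / (l.factorial : ℂ)) * ∑ σ : Equiv.Perm (Fin l), (Equiv.Perm.sign σ : ℤ) *
      ∏ p ∈ Finset.univ.filter (fun p : Fin l × Fin l => p.1 < p.2),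
        Complex.sinh ((Real.pi : ℂ) * (α (σ p.2) - α (σ p.1) - Real.pi * Complex.I) / ρ)
    = ((∏ m ∈ Finset.Icc 1 l, ((q ^ m - q⁻¹ ^ m) / (q - q⁻¹))) / (l.factorial : ℂ)) *
      ∏ p ∈ Finset.univ.filter (fun p : Fin l × Fin l => p.1 < p.2),
        Complex.sinh ((Real.pi : ℂ) * (α p.2 - α p.1) / ρ) := by
  classical
  have hP : (Finset.univ.filter (fun p : Fin l × Fin l => p.1 < p.2)) = Stmt4Aux.PP l := rfl
  rw [hP]
  set a : Fin l → ℂ := fun j => Complex.exp ((Real.pi : ℂ) * α j / ρ) with ha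
  set b : Fin l → ℂ := fun j => a j ^ 2 with hb
  have ha0 : ∀ j, a j ≠ 0 := fun j => Complex.exp_ne_zero _
  have hexp : ∀ i j : Fin l,
      Complex.exp ((Real.pi : ℂ) * (α j - α i - Real.pi * Complex.I) / ρ)
        = a j * (a i)⁻¹ * q := by
    intro i j
    rw [hq, ha]
    dsimp only
    rw [← Complex.exp_neg, ← Complex.exp_add, ← Complex.exp_add]
    congr 1
    field_simp
    ring
  have hexp2 : ∀ i j : Fin l,
      Complex.exp ((Real.pi : ℂ) * (α j - α i) / ρ) = a j * (a i)⁻¹ := by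
    intro i j
    rw [ha]
    dsimp only
    rw [← Complex.exp_neg, ← Complex.exp_add]
    congr 1
    field_simp
    ring
  have hsinh1 : ∀ i j : Fin l,
      Complex.sinh ((Real.pi : ℂ) * (α j - α i - Real.pi * Complex.I) / ρ)
        = (q * b j - q⁻¹ * b i) / (2 * a i * a j) := by
    intro i j
    rw [show Complex.sinh ((Real.pi : ℂ) * (α j - α i - Real.pi * Complex.I) / ρ)
      = (Complex.exp ((Real.pi : ℂ) * (α j - α i - Real.pi * Complex.I) / ρ)
        - Complex.exp (-((Real.pi : ℂ) * (α j - α i - Real.pi * Complex.I) / ρ))) / 2 from rfl]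
    rw [Complex.exp_neg, hexp i j, hb]
    dsimp only
    have h1 := ha0 i
    have h2 := ha0 j
    field_simp
  have hsinh2 : ∀ i j : Fin l,
      Complex.sinh ((Real.pi : ℂ) * (α j - α i) / ρ) = (b j - b i) / (2 * a i * a j) := by
    intro i j
    rw [show Complex.sinh ((Real.pi : ℂ) * (α j - α i) / ρ)
      = (Complex.exp ((Real.pi : ℂ) * (α j - α i) / ρ)
        - Complex.exp (-((Real.pi : ℂ) * (α j - α i) / ρ))) / 2 from rfl]
    rw [Complex.exp_neg, hexp2 i j, hb]
    dsimp only
    have h1 := ha0 i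
    have h2 := ha0 j
    field_simp
  set D : ℂ := ∏ p ∈ Stmt4Aux.PP l, (2 * a p.1 * a p.2) with hD
  have hprod1 : ∀ σ : Equiv.Perm (Fin l),
      (∏ p ∈ Stmt4Aux.PP l,
        Complex.sinh ((Real.pi : ℂ) * (α (σ p.2) - α (σ p.1) - Real.pi * Complex.I) / ρ))
        = (∏ p ∈ Stmt4Aux.PP l, (q * b (σ p.2) - q⁻¹ * b (σ p.1))) / D := by
    intro σ
    rw [Finset.prod_congr rfl (fun p (_ : p ∈ Stmt4Aux.PP l) => hsinh1 (σ p.1) (σ p.2)),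
      Finset.prod_div_distrib, hD]
    congr 1
    exact Stmt4Aux.sym_prod (fun i j => 2 * a i * a j) (fun i j => by ring) σ
  have hprod2 : (∏ p ∈ Stmt4Aux.PP l, Complex.sinh ((Real.pi : ℂ) * (α p.2 - α p.1) / ρ))
      = Stmt4Aux.VV l b / D := by
    rw [Finset.prod_congr rfl (fun p (_ : p ∈ Stmt4Aux.PP l) => hsinh2 p.1 p.2),
      Finset.prod_div_distrib, Stmt4Aux.VV]
  have hsum : (∑ σ : Equiv.Perm (Fin l), (Equiv.Perm.sign σ : ℤ) *
      ∏ p ∈ Stmt4Aux.PP l,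
        Complex.sinh ((Real.pi : ℂ) * (α (σ p.2) - α (σ p.1) - Real.pi * Complex.I) / ρ))
      = (Stmt4Aux.FF l q b) / D := by
    rw [Stmt4Aux.FF, Finset.sum_div]
    refine Finset.sum_congr rfl fun σ _ => ?_
    rw [hprod1 σ, mul_div_assoc]
  rw [hsum, hprod2, Stmt4Aux.core hl hq0 hroot b]
  ring
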